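/- Let L/K be a finite Galois extension of fields with group G, and suppose (c_σ)_{σ∈G} are elements of L× satisfying c_σ^τ · c_τ = c_{στ} for all σ, τ ∈ G. Then there exists b ∈ L× with c_σ = b^{1−σ} = b/σ(b) for all σ ∈ G. -/

import Mathlib

open groupCohomology

/-- Hilbert's Theorem 90 in cocycle form (Noether's "minimal principal genus theorem"):
a 1-cocycle `(c_σ)` of `Gal(L/K)` with values in `L×` (i.e. `c_σ^τ · c_τ = c_{στ}`,
where `x^τ = τ(x)`) is a coboundary: `c_σ = b/σ(b)` for some `b ∈ L×`. -/
theorem hilbert90_cocycle (K L : Type*) [Field K] [Field L] [Algebra K L]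
    [FiniteDimensional K L] [IsGalois K L]
    (c : (L ≃ₐ[K] L) → L) (hc0 : ∀ σ, c σ ≠ 0)
    (hcocycle : ∀ σ τ : L ≃ₐ[K] L, τ (c σ) * c τ = c (τ * σ)) :
    ∃ b : L, b ≠ 0 ∧ ∀ σ : L ≃ₐ[K] L, c σ = b / σ b := by
  set f : (L ≃ₐ[K] L) → Lˣ := fun σ => Units.mk0 (c σ) (hc0 σ) with hf
  have hcoc : IsMulCocycle₁ f := by
    intro g h
    ext
    simp only [hf, Units.val_mul, Units.val_mk0, AlgEquiv.smul_units_def, Units.coe_map,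
      MonoidHom.coe_coe]
    exact (hcocycle h g).symm
  obtain ⟨β, hβ⟩ := isMulCoboundary₁_of_isMulCocycle₁_of_aut_to_units f hcoc
  refine ⟨(β : L)⁻¹, inv_ne_zero β.ne_zero, fun σ => ?_⟩
  have := hβ σ
  rw [Units.ext_iff] at this
  simp only [AlgEquiv.smul_units_def, Units.val_div_eq_div_val, Units.coe_map,
    MonoidHom.coe_coe, hf, Units.val_mk0] at this
  rw [← this, map_inv₀, inv_div_inv]
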